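/- Let L: D → D be a trace-preserving completely positive map on density operators of a finite-dimensional Hilbert space of the form L(ρ) = Σ_j (1 ⊗ B_j) ρ (1 ⊗ B_j)†, acting trivially on the first tensor factor. If the induced map on the second factor has a unique fixed point ρ_fix with all other eigenvalues of modulus strictly less than 1, then for any initial state ρ on the tensor product, lim_{L→∞} L^L(ρ) = σ ⊗ ρ_fix where σ = Tr_2(ρ) is the partial trace over the second factor. -/

import Mathlib

open Finset Kronecker ComplexOrder

namespace Stmt19Aux

open Filter Module

lemma pow_tendsto_zero {A : Type*} [NormedRing A] [NormedAlgebra ℂ A]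
    [CompleteSpace A] [Nontrivial A] (a : A)
    (h : ∀ z ∈ spectrum ℂ a, ‖z‖ < 1) :
    Tendsto (fun n => a ^ n) atTop (nhds 0) := by
  have hr : spectralRadius ℂ a < 1 := by
    have h1 : ∀ z ∈ spectrum ℂ a, ‖z‖₊ < (1 : NNReal) := fun z hz => by
      simpa [← NNReal.coe_lt_coe, coe_nnnorm] using h z hz
    simpa using spectrum.spectralRadius_lt_of_forall_lt a h1
  obtain ⟨c, hc1, hc2⟩ := exists_between hr
  lift c to NNReal using (hc2.trans ENNReal.one_lt_top).ne
  have hgel := spectrum.pow_nnnorm_pow_one_div_tendsto_nhds_spectralRadius a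
  have hev : ∀ᶠ n : ℕ in atTop, ((‖a ^ n‖₊ : ENNReal)) ^ (1 / (n : ℝ)) < (c : ENNReal) :=
    hgel.eventually_lt_const hc1
  have hc1' : (c : ℝ) < 1 := by exact_mod_cast hc2
  have hbound : ∀ᶠ n : ℕ in atTop, ‖a ^ n‖ ≤ (c : ℝ) ^ n := by
    filter_upwards [hev, eventually_ge_atTop 1] with n hn hn1
    have hne : (n : ℝ) ≠ 0 := by positivity
    have key : (‖a ^ n‖₊ : ENNReal) ≤ (c : ENNReal) ^ n := by
      have h2 : (((‖a ^ n‖₊ : ENNReal)) ^ (1 / (n : ℝ))) ^ (n : ℝ) ≤ (c : ENNReal) ^ (n : ℝ) :=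
        ENNReal.rpow_le_rpow hn.le (by positivity)
      rwa [← ENNReal.rpow_mul, one_div_mul_cancel hne, ENNReal.rpow_one,
        ENNReal.rpow_natCast] at h2
    have key2 : ‖a ^ n‖₊ ≤ c ^ n := by
      rw [← ENNReal.coe_pow, ENNReal.coe_le_coe] at key; exact key
    calc ‖a ^ n‖ = ((‖a ^ n‖₊ : NNReal) : ℝ) := rfl
      _ ≤ ((c ^ n : NNReal) : ℝ) := by exact_mod_cast key2
      _ = (c : ℝ) ^ n := by push_cast; ring
  exact squeeze_zero_norm' hbound
    (tendsto_pow_atTop_nhds_zero_of_lt_one c.coe_nonneg hc1')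

noncomputable def endCLM (E : Type*) [NormedAddCommGroup E] [NormedSpace ℂ E]
    [FiniteDimensional ℂ E] : Module.End ℂ E ≃ₐ[ℂ] (E →L[ℂ] E) :=
  AlgEquiv.ofLinearEquiv LinearMap.toContinuousLinearMap (by ext x; rfl)
    (fun f g => by ext x; rfl)

lemma endCLM_apply {E : Type*} [NormedAddCommGroup E] [NormedSpace ℂ E]
    [FiniteDimensional ℂ E] (f : Module.End ℂ E) (x : E) :
    (endCLM E f) x = f x := rfl



lemma pow_apply_tendsto_zero {V : Type*} [AddCommGroup V] [Module ℂ V]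
    [TopologicalSpace V] [IsTopologicalAddGroup V] [ContinuousSMul ℂ V] [T2Space V]
    [FiniteDimensional ℂ V] (T : Module.End ℂ V)
    (h : ∀ μ : ℂ, T.HasEigenvalue μ → ‖μ‖ < 1) (x : V) :
    Tendsto (fun n => (T ^ n) x) atTop (nhds 0) := by
  rcases subsingleton_or_nontrivial V with hs | hnt
  · have : ∀ n, (T ^ n) x = 0 := fun n => Subsingleton.elim _ _
    simpa [this] using tendsto_const_nhds (α := V) (f := atTop (α := ℕ))
  · have e : V ≃ₗ[ℂ] EuclideanSpace ℂ (Fin (Module.finrank ℂ V)) :=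
      LinearEquiv.ofFinrankEq _ _ (by simp)
    set E := EuclideanSpace ℂ (Fin (Module.finrank ℂ V)) with hE
    have hEnt : Nontrivial E := e.symm.toEquiv.nontrivial
    have hCLMnt : Nontrivial (E →L[ℂ] E) := by
      obtain ⟨v, hv⟩ := exists_ne (0 : E)
      refine nontrivial_of_ne 1 0 fun hcon => hv ?_
      simpa using DFunLike.congr_fun hcon v
    set T' : Module.End ℂ E := e.conj T with hT'
    -- eigenvalue transfer
    have heigT' : ∀ μ : ℂ, T'.HasEigenvalue μ → ‖μ‖ < 1 := by
      intro μ hμ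
      obtain ⟨v, hv1, hv2⟩ := hμ.exists_hasEigenvector
      have hv1' : T' v = μ • v := Module.End.mem_eigenspace_iff.mp hv1
      refine h μ (Module.End.hasEigenvalue_of_hasEigenvector
        (x := e.symm v) ⟨Module.End.mem_eigenspace_iff.mpr ?_, ?_⟩)
      · have : e (T (e.symm v)) = μ • v := by
          rw [← LinearEquiv.conj_apply_apply e T v, ← hT', hv1']
        calc T (e.symm v) = e.symm (e (T (e.symm v))) := (e.symm_apply_apply _).symm
          _ = e.symm (μ • v) := by rw [this]
          _ = μ • e.symm v := by simp
      · simpa using hv2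
    set a : E →L[ℂ] E := endCLM E T' with ha
    have hspec : ∀ z ∈ spectrum ℂ a, ‖z‖ < 1 := by
      intro z hz
      rw [ha, AlgEquiv.spectrum_eq] at hz
      exact heigT' z (Module.End.hasEigenvalue_iff_mem_spectrum.mpr hz)
    have hzero : Tendsto (fun n => a ^ n) atTop (nhds 0) := pow_tendsto_zero a hspec
    -- identify (T ^ n) x with e.symm ((a ^ n) (e x))
    have hconjpow : ∀ n : ℕ, T' ^ n = e.conj (T ^ n) := by
      intro n
      induction n with
      | zero =>
          rw [pow_zero, pow_zero, Module.End.one_eq_id, Module.End.one_eq_id,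
            LinearEquiv.conj_id]
      | succ k ih =>
          rw [pow_succ, pow_succ, ih, hT']
          exact (LinearEquiv.conj_comp e _ _).symm
    have hkey : ∀ n : ℕ, (T ^ n) x = e.symm ((a ^ n) (e x)) := by
      intro n
      rw [ha, ← map_pow (endCLM E) T' n]
      rw [endCLM_apply, hconjpow n, LinearEquiv.conj_apply_apply,
        e.symm_apply_apply, e.symm_apply_apply]
    have happly : Tendsto (fun n => (a ^ n) (e x)) atTop (nhds 0) := by
      rw [tendsto_zero_iff_norm_tendsto_zero]
      refine squeeze_zero (fun n => norm_nonneg _)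
        (fun n => (a ^ n).le_opNorm (e x)) ?_
      simpa using (hzero.norm.mul_const ‖e x‖)
    have hcont : Continuous (e.symm : E → V) :=
      LinearMap.continuous_of_finiteDimensional (e.symm : E →ₗ[ℂ] V)
    have := (hcont.tendsto 0).comp happly
    simp only [Function.comp_def, map_zero] at this
    exact this.congr fun n => (hkey n).symm



lemma channel_tendsto {d2 J : ℕ} {B : Fin J → Matrix (Fin d2) (Fin d2) ℂ}
    (htp : ∑ j : Fin J, star (B j) * B j = 1)
    {ρfix : Matrix (Fin d2) (Fin d2) ℂ} (htr : ρfix.trace = 1)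
    (hfix : ∑ j : Fin J, B j * ρfix * star (B j) = ρfix)
    (L2 : Module.End ℂ (Matrix (Fin d2) (Fin d2) ℂ))
    (hL2 : ∀ σ : Matrix (Fin d2) (Fin d2) ℂ, L2 σ = ∑ j : Fin J, B j * σ * star (B j))
    (heig : ∀ μ : ℂ, Module.End.HasEigenvalue L2 μ → μ = 1 ∨ ‖μ‖ < 1)
    (hsimple : Module.finrank ℂ (L2.maxGenEigenspace 1) = 1)
    (x : Matrix (Fin d2) (Fin d2) ℂ) :
    Tendsto (fun k => (L2 ^ k) x) atTop (nhds (x.trace • ρfix)) := by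
  have hρne : ρfix ≠ 0 := fun h => by simp [h] at htr
  have hfix' : L2 ρfix = ρfix := by rw [hL2]; exact hfix
  -- trace preservation
  have htrace : ∀ σ : Matrix (Fin d2) (Fin d2) ℂ, (L2 σ).trace = σ.trace := by
    intro σ
    rw [hL2, Matrix.trace_sum]
    have h1 : ∀ j, (B j * σ * star (B j)).trace = ((star (B j) * B j) * σ).trace := by
      intro j
      rw [Matrix.trace_mul_cycle, mul_assoc]
    simp_rw [h1, ← Matrix.trace_sum, ← Finset.sum_mul, htp, one_mul]
  -- the two invariant subspaces
  set U := L2.maxGenEigenspace 1 with hUdef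
  set W := ⨆ μ ∈ {μ : ℂ | μ ≠ 1}, L2.maxGenEigenspace μ with hWdef
  have hmemU : ρfix ∈ U := by
    rw [hUdef, Module.End.mem_maxGenEigenspace]
    exact ⟨1, by simp [hfix']⟩
  have hU : (ℂ ∙ ρfix) = U := by
    refine Submodule.eq_of_le_of_finrank_le
      ((Submodule.span_singleton_le_iff_mem _ _).mpr hmemU) ?_
    rw [hsimple, finrank_span_singleton hρne]
  have hdisj : Disjoint U W :=
    (L2.independent_maxGenEigenspace).disjoint_biSup (by simp)
  have htop : U ⊔ W = ⊤ := by
    refine le_antisymm le_top ?_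
    rw [← Module.End.iSup_maxGenEigenspace_eq_top L2]
    refine iSup_le fun μ => ?_
    by_cases hμ : μ = 1
    · subst hμ; exact le_sup_left
    · exact le_trans (le_biSup _ hμ) le_sup_right
  have hWmaps : ∀ v ∈ W, L2 v ∈ W := by
    have hmap : Submodule.map L2 W ≤ W := by
      rw [hWdef]
      simp only [Submodule.map_iSup]
      refine iSup_mono fun μ => ?_
      refine iSup_le fun hμ => le_trans ?_ (le_iSup _ hμ)
      rw [Submodule.map_le_iff_le_comap]
      intro y hy
      exact L2.mapsTo_genEigenspace_of_comm (Commute.refl L2) μ ⊤ hy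
    intro v hv
    exact hmap ⟨v, hv, rfl⟩
  -- decompose x
  have hx : x ∈ U ⊔ W := htop.ge Submodule.mem_top
  obtain ⟨u, hu, w, hw, hxuw⟩ := Submodule.mem_sup.mp hx
  rw [← hU] at hu
  obtain ⟨c, rfl⟩ := Submodule.mem_span_singleton.mp hu
  -- powers on the fixed part
  have hLu : ∀ k : ℕ, (L2 ^ k) (c • ρfix) = c • ρfix := by
    intro k
    induction k with
    | zero => simp
    | succ n ih => rw [pow_succ, Module.End.mul_apply, map_smul, hfix', ih]
  -- powers on W tend to zero
  set TW : Module.End ℂ W := L2.restrict hWmaps with hTW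
  have heigW : ∀ μ : ℂ, TW.HasEigenvalue μ → ‖μ‖ < 1 := by
    intro μ hμ
    obtain ⟨v, hv1, hv2⟩ := hμ.exists_hasEigenvector
    have hv1' : TW v = μ • v := Module.End.mem_eigenspace_iff.mp hv1
    have hcoe : L2 (v : Matrix (Fin d2) (Fin d2) ℂ) = μ • (v : Matrix (Fin d2) (Fin d2) ℂ) := by
      have := congrArg (Subtype.val) hv1'
      simpa [hTW, LinearMap.restrict_coe_apply] using this
    have hvne : (v : Matrix (Fin d2) (Fin d2) ℂ) ≠ 0 := by
      simpa [Submodule.coe_eq_zero] using hv2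
    have hev : L2.HasEigenvalue μ :=
      Module.End.hasEigenvalue_of_hasEigenvector
        ⟨Module.End.mem_eigenspace_iff.mpr hcoe, hvne⟩
    rcases heig μ hev with h1 | h1
    · exfalso
      subst h1
      have hUmem : (v : Matrix (Fin d2) (Fin d2) ℂ) ∈ U := by
        rw [hUdef, Module.End.mem_maxGenEigenspace]
        exact ⟨1, by simp [hcoe]⟩
      have : (v : Matrix (Fin d2) (Fin d2) ℂ) = 0 :=
        (Submodule.mem_bot ℂ).mp (hdisj.le_bot ⟨hUmem, v.2⟩)
      exact hvne this
    · exact h1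
  have hWzero : Tendsto (fun k => (L2 ^ k) w) atTop (nhds 0) := by
    have h0 : Tendsto (fun k => (TW ^ k) ⟨w, hw⟩) atTop (nhds 0) :=
      pow_apply_tendsto_zero TW heigW _
    have hcont : Continuous (Subtype.val : W → Matrix (Fin d2) (Fin d2) ℂ) :=
      continuous_subtype_val
    have := (hcont.tendsto 0).comp h0
    simp only [Function.comp_def] at this
    refine this.congr fun k => ?_
    rw [hTW, Module.End.pow_restrict, LinearMap.restrict_coe_apply]
  -- combine
  have hconv : Tendsto (fun k => (L2 ^ k) x) atTop (nhds (c • ρfix)) := by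
    have : (fun k => (L2 ^ k) x) = fun k => c • ρfix + (L2 ^ k) w := by
      funext k
      rw [← hxuw, map_add, hLu]
    rw [this]
    simpa using (tendsto_const_nhds (x := c • ρfix) (f := atTop (α := ℕ))).add hWzero
  -- identify the coefficient with the trace
  have htrx : ∀ k : ℕ, ((L2 ^ k) x).trace = x.trace := by
    intro k
    induction k with
    | zero => simp
    | succ n ih => rw [pow_succ', Module.End.mul_apply, htrace, ih]
  have htcont : Continuous fun M : Matrix (Fin d2) (Fin d2) ℂ => M.trace :=
    LinearMap.continuous_of_finiteDimensional (Matrix.traceLinearMap (Fin d2) ℂ ℂ)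
  have h1 : Tendsto (fun k => ((L2 ^ k) x).trace) atTop (nhds ((c • ρfix).trace)) :=
    (htcont.tendsto _).comp hconv
  have h2 : Tendsto (fun k => ((L2 ^ k) x).trace) atTop (nhds x.trace) := by
    simpa [htrx] using tendsto_const_nhds (x := x.trace) (f := atTop (α := ℕ))
  have hc : (c • ρfix).trace = x.trace := tendsto_nhds_unique h1 h2
  rw [Matrix.trace_smul, htr, smul_eq_mul, mul_one] at hc
  rwa [← hc]

end Stmt19Aux

open Filter Module in
/-- Let `L(ρ) = Σ_j (1 ⊗ B_j) ρ (1 ⊗ B_j)†` be a trace-preserving completely positive map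
acting trivially on the first tensor factor. If the induced channel on the second factor,
`σ ↦ Σ_j B_j σ B_j†`, has a unique fixed density operator `ρ_fix` (1 a simple eigenvalue)
and all other eigenvalues of modulus strictly less than 1, then for any initial operator
`ρ` on the tensor product, `L^L(ρ) → Tr₂(ρ) ⊗ ρ_fix` as `L → ∞`. -/
theorem stmt19 (d1 d2 J : ℕ)
    (B : Fin J → Matrix (Fin d2) (Fin d2) ℂ)
    (htp : ∑ j : Fin J, star (B j) * B j = 1)
    (ρfix : Matrix (Fin d2) (Fin d2) ℂ)
    (hpos : ρfix.PosSemidef) (htr : ρfix.trace = 1)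
    (hfix : ∑ j : Fin J, B j * ρfix * star (B j) = ρfix)
    (L2 : Module.End ℂ (Matrix (Fin d2) (Fin d2) ℂ))
    (hL2 : ∀ σ : Matrix (Fin d2) (Fin d2) ℂ, L2 σ = ∑ j : Fin J, B j * σ * star (B j))
    (heig : ∀ μ : ℂ, Module.End.HasEigenvalue L2 μ → μ = 1 ∨ ‖μ‖ < 1)
    (hsimple : Module.finrank ℂ (L2.maxGenEigenspace 1) = 1) :
    ∀ ρ : Matrix (Fin d1 × Fin d2) (Fin d1 × Fin d2) ℂ,
      Filter.Tendsto
        (fun k =>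
          (fun σ : Matrix (Fin d1 × Fin d2) (Fin d1 × Fin d2) ℂ =>
            ∑ j : Fin J, ((1 : Matrix (Fin d1) (Fin d1) ℂ) ⊗ₖ B j) * σ *
              star ((1 : Matrix (Fin d1) (Fin d1) ℂ) ⊗ₖ B j))^[k] ρ)
        Filter.atTop
        (nhds ((Matrix.of fun a b : Fin d1 => ∑ i : Fin d2, ρ (a, i) (b, i)) ⊗ₖ ρfix)) := by
  intro ρ
  set F : Matrix (Fin d1 × Fin d2) (Fin d1 × Fin d2) ℂ →
      Matrix (Fin d1 × Fin d2) (Fin d1 × Fin d2) ℂ :=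
    fun σ => ∑ j : Fin J, ((1 : Matrix (Fin d1) (Fin d1) ℂ) ⊗ₖ B j) * σ *
      star ((1 : Matrix (Fin d1) (Fin d1) ℂ) ⊗ₖ B j) with hF
  set blk : Fin d1 → Fin d1 → Matrix (Fin d1 × Fin d2) (Fin d1 × Fin d2) ℂ →
      Matrix (Fin d2) (Fin d2) ℂ :=
    fun a b σ => Matrix.of fun i i' => σ (a, i) (b, i') with hblk
  have hstep : ∀ σ a b, blk a b (F σ) = L2 (blk a b σ) := by
    intro σ a b
    ext i i'
    rw [hL2]
    simp only [hF, hblk, Matrix.of_apply, Matrix.sum_apply, Matrix.mul_apply,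
      Matrix.star_apply, Matrix.kroneckerMap_apply, Matrix.one_apply,
      Fintype.sum_prod_type, Matrix.star_eq_conjTranspose, Matrix.conjTranspose_apply]
    refine Finset.sum_congr rfl fun j _ => ?_
    have hst : ∀ (c : Prop) [Decidable c] (x : ℂ),
        star (if c then x else 0) = if c then star x else 0 := fun c _ x => by split <;> simp
    simp only [hst, mul_ite, mul_zero, ite_mul, zero_mul, one_mul, star_one,
      Finset.sum_ite_irrel, Finset.sum_const_zero, Finset.sum_ite_eq,
      Finset.mem_univ, if_true]
  have hiter : ∀ (k : ℕ) (a b : Fin d1), blk a b (F^[k] ρ) = (L2 ^ k) (blk a b ρ) := by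
    intro k
    induction k with
    | zero => intro a b; simp
    | succ n ih =>
        intro a b
        rw [Function.iterate_succ_apply', hstep, ih a b, ← Module.End.mul_apply, ← pow_succ']
  have hfin : ∀ a b : Fin d1, Tendsto (fun k => blk a b (F^[k] ρ)) atTop
      (nhds ((blk a b ρ).trace • ρfix)) := by
    intro a b
    simp only [hiter]
    exact Stmt19Aux.channel_tendsto htp htr hfix L2 hL2 heig hsimple _
  rw [show (nhds ((Matrix.of fun a b : Fin d1 => ∑ i : Fin d2, ρ (a, i) (b, i)) ⊗ₖ ρfix)) =
    nhds ((Matrix.of fun a b : Fin d1 => ∑ i : Fin d2, ρ (a, i) (b, i)) ⊗ₖ ρfix) from rfl]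
  refine tendsto_pi_nhds.mpr ?_
  intro p
  refine tendsto_pi_nhds.mpr ?_
  intro q
  obtain ⟨a, i⟩ := p
  obtain ⟨b, i'⟩ := q
  have h1 := hfin a b
  replace h1 := tendsto_pi_nhds.mp h1
  have h2 := h1 i
  replace h2 := tendsto_pi_nhds.mp h2
  have h3 := h2 i'
  have hentry : (((blk a b ρ).trace • ρfix) i i') =
      ((Matrix.of fun a b : Fin d1 => ∑ i : Fin d2, ρ (a, i) (b, i)) ⊗ₖ ρfix) (a, i) (b, i') := by
    simp [hblk, Matrix.smul_apply, Matrix.kroneckerMap_apply, Matrix.trace, Matrix.diag,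
      smul_eq_mul]
  rw [← hentry]
  exact h3
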